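/- If M is a Gorenstein flat left R-module, then Tor^R_i(I, M) = 0 for every injective right R-module I and all i > 0, and there exists an exact sequence 0 → M → F₀ → F₁ → ... of left R-modules with each Fᵢ flat that remains exact after applying I ⊗_R − for every injective right R-module I; conversely, these two conditions imply that M is Gorenstein flat. -/

import Mathlib

open TensorProduct

universe u
section NCTensor
variable (R : Type u) [Ring R]

/-- Generators of the defect submodule used to define the tensor product of a right
`R`-module `N` and a left `R`-module `M` over a (possibly noncommutative) ring `R`. -/
def NCRel (N M : Type u) [AddCommGroup N] [Module Rᵐᵒᵖ N] [AddCommGroup M] [Module R M] :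
    Submodule ℤ (N ⊗[ℤ] M) :=
  Submodule.span ℤ { t | ∃ (n : N) (r : R) (m : M),
    t = (MulOpposite.op r • n) ⊗ₜ[ℤ] m - n ⊗ₜ[ℤ] (r • m) }

/-- The tensor product `N ⊗_R M` of a right `R`-module and a left `R`-module, as an
abelian group. -/
def NCTensor (N M : Type u) [AddCommGroup N] [Module Rᵐᵒᵖ N] [AddCommGroup M] [Module R M] :
    Type u :=
  (N ⊗[ℤ] M) ⧸ NCRel R N M

noncomputable instance (N M : Type u) [AddCommGroup N] [Module Rᵐᵒᵖ N] [AddCommGroup M] [Module R M] :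
    AddCommGroup (NCTensor R N M) :=
  inferInstanceAs (AddCommGroup ((N ⊗[ℤ] M) ⧸ NCRel R N M))

noncomputable instance (N M : Type u) [AddCommGroup N] [Module Rᵐᵒᵖ N] [AddCommGroup M] [Module R M] :
    Module ℤ (NCTensor R N M) :=
  inferInstanceAs (Module ℤ ((N ⊗[ℤ] M) ⧸ NCRel R N M))

/-- The map `I ⊗_R M → I ⊗_R M'` induced by a map `M →ₗ[R] M'` of left modules. -/
noncomputable def NCmap (N : Type u) [AddCommGroup N] [Module Rᵐᵒᵖ N] {M M' : Type u} [AddCommGroup M]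
    [Module R M] [AddCommGroup M'] [Module R M'] (f : M →ₗ[R] M') :
    NCTensor R N M →ₗ[ℤ] NCTensor R N M' :=
  Submodule.mapQ _ _ (LinearMap.lTensor N (f.restrictScalars ℤ)) <| by
    rw [NCRel, Submodule.span_le]
    rintro t ⟨n, r, m, rfl⟩
    refine Submodule.mem_comap.mpr (Submodule.subset_span ?_)
    refine ⟨n, r, f m, ?_⟩
    change LinearMap.lTensor N (f.restrictScalars ℤ) ((MulOpposite.op r • n) ⊗ₜ[ℤ] m - n ⊗ₜ[ℤ] (r • m)) = _
    simp [LinearMap.lTensor_tmul, map_sub, LinearMap.map_smul]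

/-- The map `N ⊗_R M → N' ⊗_R M` induced by a map `N →ₗ[Rᵐᵒᵖ] N'` of right modules. -/
noncomputable def NCmapL (R : Type u) [Ring R] {N N' : Type u} [AddCommGroup N]
    [Module Rᵐᵒᵖ N] [AddCommGroup N'] [Module Rᵐᵒᵖ N'] (M : Type u) [AddCommGroup M]
    [Module R M] (f : N →ₗ[Rᵐᵒᵖ] N') :
    NCTensor R N M →ₗ[ℤ] NCTensor R N' M :=
  Submodule.mapQ _ _ (LinearMap.rTensor M f.toAddMonoidHom.toIntLinearMap) <| by
    rw [NCRel, Submodule.span_le]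
    rintro t ⟨n, r, m, rfl⟩
    refine Submodule.mem_comap.mpr (Submodule.subset_span ?_)
    refine ⟨f n, r, m, ?_⟩
    change LinearMap.rTensor M f.toAddMonoidHom.toIntLinearMap ((MulOpposite.op r • n) ⊗ₜ[ℤ] m - n ⊗ₜ[ℤ] (r • m)) = _
    simp [LinearMap.rTensor_tmul, map_sub, LinearMap.map_smul]

/-- A left `R`-module `M` (over a possibly noncommutative ring) is flat if tensoring with
`M` preserves injectivity of maps of right `R`-modules. -/
def FlatModule (R : Type u) [Ring R] (M : Type u) [AddCommGroup M] [Module R M] : Prop :=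
  ∀ (N N' : Type u) [AddCommGroup N] [Module Rᵐᵒᵖ N] [AddCommGroup N'] [Module Rᵐᵒᵖ N']
    (f : N →ₗ[Rᵐᵒᵖ] N'), Function.Injective f → Function.Injective (NCmapL R M f)

end NCTensor

section NCBasic
variable {R : Type u} [Ring R]

namespace NCTensor

variable {N M : Type u} [AddCommGroup N] [Module Rᵐᵒᵖ N] [AddCommGroup M] [Module R M]

/-- basic generator -/
noncomputable def mk (R : Type u) [Ring R] {N M : Type u} [AddCommGroup N] [Module Rᵐᵒᵖ N]
    [AddCommGroup M] [Module R M] (n : N) (m : M) : NCTensor R N M :=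
  Submodule.Quotient.mk (n ⊗ₜ[ℤ] m)

lemma mk_add_left (n n' : N) (m : M) : mk R (n + n') m = mk R n m + mk R n' m := by
  rw [mk, mk, mk, TensorProduct.add_tmul, Submodule.Quotient.mk_add]
  rfl

lemma mk_add_right (n : N) (m m' : M) : mk R n (m + m') = mk R n m + mk R n m' := by
  rw [mk, mk, mk, TensorProduct.tmul_add, Submodule.Quotient.mk_add]
  rfl

lemma mk_zero_left (m : M) : mk R (0 : N) m = 0 := by
  rw [mk, TensorProduct.zero_tmul]; rfl

lemma mk_zero_right (n : N) : mk R n (0 : M) = 0 := by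
  rw [mk, TensorProduct.tmul_zero]; rfl

lemma mk_smul (r : R) (n : N) (m : M) : mk R (MulOpposite.op r • n) m = mk R n (r • m) := by
  exact (Submodule.Quotient.eq (NCRel R N M)).2 (Submodule.subset_span ⟨n, r, m, rfl⟩)

lemma ind {P : NCTensor R N M → Prop} (zero : P 0) (tm : ∀ n m, P (mk R n m))
    (add : ∀ x y, P x → P y → P (x + y)) : ∀ x, P x := by
  intro x
  obtain ⟨y, rfl⟩ := Submodule.Quotient.mk_surjective _ x
  induction y using TensorProduct.induction_on with
  | zero => exact zero
  | tmul n m => exact tm n m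
  | add a b ha hb => rw [Submodule.Quotient.mk_add]; exact add _ _ ha hb

lemma hom_ext {T : Type*} [AddCommGroup T] {f g : NCTensor R N M →ₗ[ℤ] T}
    (h : ∀ n m, f (mk R n m) = g (mk R n m)) : f = g := by
  ext x
  induction x using ind with
  | zero => simp
  | tm n m => exact h n m
  | add a b ha hb => simp [map_add, ha, hb]

/-- lift of an additive bi-map balanced over R -/
noncomputable def lift {T : Type u} [AddCommGroup T] (φ : N →+ M →+ T)
    (hφ : ∀ (n : N) (r : R) (m : M), φ (MulOpposite.op r • n) m = φ n (r • m)) :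
    NCTensor R N M →ₗ[ℤ] T := by
  refine Submodule.liftQ _ (TensorProduct.lift (R := ℤ) ?_) ?_
  · exact
    { toFun := fun n => (φ n).toIntLinearMap
      map_add' := by intro a b; ext m; simp
      map_smul' := by intro z a; ext m; simp }
  · apply Submodule.span_le.mpr
    rintro t ⟨n, r, m, rfl⟩
    show TensorProduct.lift _ _ = 0
    simp only [map_sub, TensorProduct.lift.tmul]
    simpa using sub_eq_zero.2 (hφ n r m)

@[simp] lemma lift_mk {T : Type u} [AddCommGroup T] (φ : N →+ M →+ T)
    (hφ : ∀ (n : N) (r : R) (m : M), φ (MulOpposite.op r • n) m = φ n (r • m))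
    (n : N) (m : M) : lift φ hφ (mk R n m) = φ n m := by
  rfl

end NCTensor

section maps
variable {R : Type u} [Ring R]
variable {N N' : Type u} [AddCommGroup N] [Module Rᵐᵒᵖ N] [AddCommGroup N'] [Module Rᵐᵒᵖ N']
variable {A B C : Type u} [AddCommGroup A] [Module R A] [AddCommGroup B] [Module R B]
  [AddCommGroup C] [Module R C]

@[simp] lemma NCmap_mk (f : A →ₗ[R] B) (n : N) (a : A) :
    NCmap R N f (NCTensor.mk R n a) = NCTensor.mk R n (f a) := by
  rfl

@[simp] lemma NCmapL_mk (g : N →ₗ[Rᵐᵒᵖ] N') (n : N) (a : A) :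
    NCmapL R A g (NCTensor.mk R n a) = NCTensor.mk R (g n) a := by
  rfl

lemma NCmap_id : NCmap R N (LinearMap.id : A →ₗ[R] A) = LinearMap.id :=
  NCTensor.hom_ext fun n a => by simp

lemma NCmap_comp (f : A →ₗ[R] B) (g : B →ₗ[R] C) :
    NCmap R N (g ∘ₗ f) = NCmap R N g ∘ₗ NCmap R N f :=
  NCTensor.hom_ext fun n a => by simp

lemma NCmap_zero : NCmap R N (0 : A →ₗ[R] B) = 0 :=
  NCTensor.hom_ext fun n a => by simp [NCTensor.mk_zero_right]

lemma NCmap_add (f g : A →ₗ[R] B) :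
    NCmap R N (f + g) = NCmap R N f + NCmap R N g :=
  NCTensor.hom_ext fun n a => by simp [NCTensor.mk_add_right]

lemma NCmapL_comp (f : N →ₗ[Rᵐᵒᵖ] N') {N'' : Type u} [AddCommGroup N''] [Module Rᵐᵒᵖ N'']
    (g : N' →ₗ[Rᵐᵒᵖ] N'') :
    NCmapL R A (g ∘ₗ f) = NCmapL R A g ∘ₗ NCmapL R A f :=
  NCTensor.hom_ext fun n a => by simp

lemma NCmapL_zero : NCmapL R A (0 : N →ₗ[Rᵐᵒᵖ] N') = 0 :=
  NCTensor.hom_ext fun n a => by simp [NCTensor.mk_zero_left]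

lemma NCmap_NCmapL_comm (f : A →ₗ[R] B) (g : N →ₗ[Rᵐᵒᵖ] N') :
    NCmap R N' f ∘ₗ NCmapL R A g = NCmapL R B g ∘ₗ NCmap R N f :=
  NCTensor.hom_ext fun n a => by simp

lemma NCmap_surjective (f : A →ₗ[R] B) (hf : Function.Surjective f) :
    Function.Surjective (NCmap R N f) := by
  intro y
  induction y using NCTensor.ind with
  | zero => exact ⟨0, map_zero _⟩
  | tm n b =>
    obtain ⟨a, rfl⟩ := hf b
    exact ⟨NCTensor.mk R n a, NCmap_mk f n a⟩
  | add x y hx hy =>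
    obtain ⟨x', hx'⟩ := hx; obtain ⟨y', hy'⟩ := hy
    exact ⟨x' + y', by rw [map_add, hx', hy']⟩

lemma NCmapL_surjective (g : N →ₗ[Rᵐᵒᵖ] N') (hg : Function.Surjective g) :
    Function.Surjective (NCmapL R A g) := by
  intro y
  induction y using NCTensor.ind with
  | zero => exact ⟨0, map_zero _⟩
  | tm n b =>
    obtain ⟨m, rfl⟩ := hg n
    exact ⟨NCTensor.mk R m b, NCmapL_mk g m b⟩
  | add x y hx hy =>
    obtain ⟨x', hx'⟩ := hx; obtain ⟨y', hy'⟩ := hy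
    exact ⟨x' + y', by rw [map_add, hx', hy']⟩

end maps

section exactness
variable {R : Type u} [Ring R]

lemma NCRel_map_le {N : Type u} [AddCommGroup N] [Module Rᵐᵒᵖ N]
    {B C : Type u} [AddCommGroup B] [Module R B] [AddCommGroup C] [Module R C]
    (g : B →ₗ[R] C) (hg : Function.Surjective g) :
    NCRel R N C ≤ Submodule.map (LinearMap.lTensor N (g.restrictScalars ℤ)) (NCRel R N B) := by
  apply Submodule.span_le.mpr
  rintro t ⟨n, r, c, rfl⟩
  obtain ⟨b, rfl⟩ := hg c
  refine ⟨(MulOpposite.op r • n) ⊗ₜ[ℤ] b - n ⊗ₜ[ℤ] (r • b),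
    Submodule.subset_span ⟨n, r, b, rfl⟩, ?_⟩
  simp [LinearMap.lTensor_tmul, map_sub]

/-- right exactness of `I ⊗_R -` -/
lemma NCmap_exact (I : Type u) [AddCommGroup I] [Module Rᵐᵒᵖ I]
    {A B C : Type u} [AddCommGroup A] [Module R A] [AddCommGroup B] [Module R B]
    [AddCommGroup C] [Module R C]
    (f : A →ₗ[R] B) (g : B →ₗ[R] C) (hfg : Function.Exact f g) (hg : Function.Surjective g) :
    Function.Exact (NCmap R I f) (NCmap R I g) := by
  rw [LinearMap.exact_iff]
  apply le_antisymm
  · -- ker ≤ range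
    intro x hx
    obtain ⟨y, rfl⟩ := Submodule.Quotient.mk_surjective _ x
    replace hx := LinearMap.mem_ker.mp hx
    have hx' : (LinearMap.lTensor I (g.restrictScalars ℤ)) y ∈ NCRel R I C := by
      rwa [← Submodule.Quotient.mk_eq_zero (NCRel R I C)]
    obtain ⟨y', hy', hyy'⟩ := NCRel_map_le g hg hx'
    have hker : (LinearMap.lTensor I (g.restrictScalars ℤ)) (y - y') = 0 := by
      rw [map_sub, hyy', sub_self]
    have hex : Function.Exact (LinearMap.lTensor I (f.restrictScalars ℤ))
        (LinearMap.lTensor I (g.restrictScalars ℤ)) :=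
      lTensor_exact I (by simpa using hfg) (by simpa using hg)
    obtain ⟨z, hz⟩ := (hex _).mp hker
    refine ⟨Submodule.Quotient.mk z, ?_⟩
    have : NCmap R I f (Submodule.Quotient.mk z)
        = Submodule.Quotient.mk ((LinearMap.lTensor I (f.restrictScalars ℤ)) z) := rfl
    rw [this, hz, Submodule.Quotient.mk_sub]
    rw [(Submodule.Quotient.mk_eq_zero (NCRel R I B)).2 hy', sub_zero]
  · -- range ≤ ker
    rintro x ⟨y, rfl⟩
    rw [LinearMap.mem_ker, ← LinearMap.comp_apply, ← NCmap_comp]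
    have : g ∘ₗ f = 0 := by
      ext a; simpa using hfg.apply_apply_eq_zero a
    rw [this, NCmap_zero]
    rfl

lemma NCRelL_map_le {N N' : Type u} [AddCommGroup N] [Module Rᵐᵒᵖ N] [AddCommGroup N']
    [Module Rᵐᵒᵖ N'] {A : Type u} [AddCommGroup A] [Module R A]
    (g : N →ₗ[Rᵐᵒᵖ] N') (hg : Function.Surjective g) :
    NCRel R N' A ≤ Submodule.map (LinearMap.rTensor A g.toAddMonoidHom.toIntLinearMap)
      (NCRel R N A) := by
  apply Submodule.span_le.mpr
  rintro t ⟨n', r, a, rfl⟩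
  obtain ⟨n, rfl⟩ := hg n'
  refine ⟨(MulOpposite.op r • n) ⊗ₜ[ℤ] a - n ⊗ₜ[ℤ] (r • a),
    Submodule.subset_span ⟨n, r, a, rfl⟩, ?_⟩
  simp [LinearMap.rTensor_tmul, map_sub]

/-- right exactness of `- ⊗_R A` -/
lemma NCmapL_exact {N N' N'' : Type u} [AddCommGroup N] [Module Rᵐᵒᵖ N] [AddCommGroup N']
    [Module Rᵐᵒᵖ N'] [AddCommGroup N''] [Module Rᵐᵒᵖ N'']
    (A : Type u) [AddCommGroup A] [Module R A]
    (f : N →ₗ[Rᵐᵒᵖ] N') (g : N' →ₗ[Rᵐᵒᵖ] N'') (hfg : Function.Exact f g)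
    (hg : Function.Surjective g) :
    Function.Exact (NCmapL R A f) (NCmapL R A g) := by
  rw [LinearMap.exact_iff]
  apply le_antisymm
  · intro x hx
    obtain ⟨y, rfl⟩ := Submodule.Quotient.mk_surjective _ x
    replace hx := LinearMap.mem_ker.mp hx
    have hx' : (LinearMap.rTensor A g.toAddMonoidHom.toIntLinearMap) y ∈ NCRel R N'' A := by
      rwa [← Submodule.Quotient.mk_eq_zero (NCRel R N'' A)]
    obtain ⟨y', hy', hyy'⟩ := NCRelL_map_le g hg hx'
    have hker : (LinearMap.rTensor A g.toAddMonoidHom.toIntLinearMap) (y - y') = 0 := by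
      rw [map_sub, hyy', sub_self]
    have hex : Function.Exact (LinearMap.rTensor A f.toAddMonoidHom.toIntLinearMap)
        (LinearMap.rTensor A g.toAddMonoidHom.toIntLinearMap) :=
      rTensor_exact A (by simpa using hfg) (by simpa using hg)
    obtain ⟨z, hz⟩ := (hex _).mp hker
    refine ⟨Submodule.Quotient.mk z, ?_⟩
    have : NCmapL R A f (Submodule.Quotient.mk z)
        = Submodule.Quotient.mk ((LinearMap.rTensor A f.toAddMonoidHom.toIntLinearMap) z) := rfl
    rw [this, hz, Submodule.Quotient.mk_sub]
    rw [(Submodule.Quotient.mk_eq_zero (NCRel R N' A)).2 hy', sub_zero]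
  · rintro x ⟨y, rfl⟩
    rw [LinearMap.mem_ker, ← LinearMap.comp_apply, ← NCmapL_comp]
    have : g ∘ₗ f = 0 := by
      ext a; simpa using hfg.apply_apply_eq_zero a
    rw [this, NCmapL_zero]
    rfl

end exactness

section free
variable {R : Type u} [Ring R]

open NCTensor MulOpposite

/-- comparison map `(S →₀ Rᵐᵒᵖ) ⊗_R A → (S →₀ A)` -/
noncomputable def freeLcmp (S A : Type u) [AddCommGroup A] [Module R A] :
    NCTensor R (S →₀ Rᵐᵒᵖ) A →ₗ[ℤ] (S →₀ A) := by
  refine NCTensor.lift ?_ ?_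
  · refine AddMonoidHom.mk' (fun n => AddMonoidHom.mk'
      (fun a => n.sum fun s or => Finsupp.single s (or.unop • a)) ?_) ?_
    · intro a a'
      simp [smul_add, Finsupp.single_add, Finsupp.sum_add]
    · intro n n'
      ext a
      simp only [AddMonoidHom.mk'_apply, AddMonoidHom.add_apply]
      rw [Finsupp.sum_add_index']
      · intro s; simp
      · intro s b b'; simp [add_smul, Finsupp.single_add]
  · intro n r a
    simp only [AddMonoidHom.mk'_apply]
    rw [Finsupp.sum_smul_index']
    · refine Finsupp.sum_congr fun s _ => ?_
      have : (op r • n s).unop = (n s).unop * r := rfl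
      rw [this, mul_smul]
    · intro s; simp

@[simp] lemma freeLcmp_mk (S A : Type u) [AddCommGroup A] [Module R A]
    (n : S →₀ Rᵐᵒᵖ) (a : A) :
    freeLcmp S A (NCTensor.mk R n a) = n.sum fun s or => Finsupp.single s (or.unop • a) := by
  rw [freeLcmp, NCTensor.lift_mk]
  rfl

noncomputable def freeLinv (S A : Type u) [AddCommGroup A] [Module R A] :
    (S →₀ A) →ₗ[ℤ] NCTensor R (S →₀ Rᵐᵒᵖ) A :=
  Finsupp.lsum ℤ fun s => (AddMonoidHom.mk'
    (fun a => NCTensor.mk R (Finsupp.single s (1 : Rᵐᵒᵖ)) a)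
    (fun a a' => NCTensor.mk_add_right _ _ _)).toIntLinearMap

lemma freeLinv_comp (S A : Type u) [AddCommGroup A] [Module R A] (x : NCTensor R (S →₀ Rᵐᵒᵖ) A) :
    freeLinv S A (freeLcmp S A x) = x := by
  induction x using NCTensor.ind with
  | zero => simp
  | add x y hx hy => simp [map_add, hx, hy]
  | tm n a =>
    rw [freeLcmp_mk, map_finsuppSum]
    have h1 : ∀ (s : S) (or : Rᵐᵒᵖ),
        freeLinv S A (Finsupp.single s (or.unop • a)) = NCTensor.mk R (Finsupp.single s or) a := by
      intro s or
      rw [freeLinv, Finsupp.lsum_single]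
      show NCTensor.mk R (Finsupp.single s (1 : Rᵐᵒᵖ)) (or.unop • a) = _
      rw [← NCTensor.mk_smul]
      congr 1
      rw [op_unop, Finsupp.smul_single, smul_eq_mul, mul_one]
    rw [Finsupp.sum_congr (g2 := fun s or => NCTensor.mk R (Finsupp.single s or) a)
      fun s _ => h1 s (n s)]
    have := map_finsuppSum (AddMonoidHom.mk' (fun n' : S →₀ Rᵐᵒᵖ => NCTensor.mk R n' a)
      (fun n' n'' => NCTensor.mk_add_left _ _ _)) n (fun s or => Finsupp.single s or)
    simp only [AddMonoidHom.mk'_apply] at this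
    rw [← this, Finsupp.sum_single]

lemma freeLcmp_natural (S : Type u) {A B : Type u} [AddCommGroup A] [Module R A]
    [AddCommGroup B] [Module R B] (f : A →ₗ[R] B) (x : NCTensor R (S →₀ Rᵐᵒᵖ) A) :
    freeLcmp S B (NCmap R (S →₀ Rᵐᵒᵖ) f x)
      = Finsupp.mapRange.linearMap (f.restrictScalars ℤ) (freeLcmp S A x) := by
  induction x using NCTensor.ind with
  | zero => simp
  | add x y hx hy => simp [map_add, hx, hy]
  | tm n a =>
    rw [NCmap_mk, freeLcmp_mk, freeLcmp_mk, map_finsuppSum]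
    refine Finsupp.sum_congr fun s _ => ?_
    simp [Finsupp.mapRange_single]

/-- tensoring with a free right module preserves injectivity -/
lemma NCmap_injective_of_free (S : Type u) {A B : Type u} [AddCommGroup A] [Module R A]
    [AddCommGroup B] [Module R B] (f : A →ₗ[R] B) (hf : Function.Injective f) :
    Function.Injective (NCmap R (S →₀ Rᵐᵒᵖ) f) := by
  intro x y hxy
  have h1 : freeLcmp S B (NCmap R (S →₀ Rᵐᵒᵖ) f x) = freeLcmp S B (NCmap R (S →₀ Rᵐᵒᵖ) f y) := by
    rw [hxy]
  rw [freeLcmp_natural, freeLcmp_natural] at h1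
  have h2 : freeLcmp S A x = freeLcmp S A y := by
    have : Function.Injective (Finsupp.mapRange.linearMap (M := A) (N := B) (α := S)
        (f.restrictScalars ℤ)) := by
      intro u v huv
      ext s
      apply hf
      have := congrArg (fun w => w s) huv
      simpa using this
    exact this h1
  rw [← freeLinv_comp S A x, ← freeLinv_comp S A y, h2]

/-- comparison map `N ⊗_R (S →₀ R) → (S →₀ N)` -/
noncomputable def freeRcmp (S N : Type u) [AddCommGroup N] [Module Rᵐᵒᵖ N] :
    NCTensor R N (S →₀ R) →ₗ[ℤ] (S →₀ N) := by
  refine NCTensor.lift ?_ ?_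
  · refine AddMonoidHom.mk' (fun n => AddMonoidHom.mk'
      (fun m => m.sum fun s r => Finsupp.single s (op r • n)) ?_) ?_
    · intro m m'
      rw [Finsupp.sum_add_index']
      · intro s; simp
      · intro s b b'; simp [op_add, add_smul, Finsupp.single_add]
    · intro n n'
      ext m
      simp [smul_add, Finsupp.single_add, Finsupp.sum_add]
  · intro n r m
    simp only [AddMonoidHom.mk'_apply]
    rw [Finsupp.sum_smul_index']
    · refine Finsupp.sum_congr fun s _ => ?_
      have : op (r * m s) = op (m s) * op r := by simp [op_mul]
      rw [smul_eq_mul, this, mul_smul]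
    · intro s; simp

@[simp] lemma freeRcmp_mk (S N : Type u) [AddCommGroup N] [Module Rᵐᵒᵖ N]
    (n : N) (m : S →₀ R) :
    freeRcmp S N (NCTensor.mk R n m) = m.sum fun s r => Finsupp.single s (op r • n) := by
  rw [freeRcmp, NCTensor.lift_mk]
  rfl

noncomputable def freeRinv (S N : Type u) [AddCommGroup N] [Module Rᵐᵒᵖ N] :
    (S →₀ N) →ₗ[ℤ] NCTensor R N (S →₀ R) :=
  Finsupp.lsum ℤ fun s => (AddMonoidHom.mk'
    (fun n => NCTensor.mk R n (Finsupp.single s (1 : R)))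
    (fun n n' => NCTensor.mk_add_left _ _ _)).toIntLinearMap

lemma freeRinv_comp (S N : Type u) [AddCommGroup N] [Module Rᵐᵒᵖ N]
    (x : NCTensor R N (S →₀ R)) : freeRinv S N (freeRcmp S N x) = x := by
  induction x using NCTensor.ind with
  | zero => simp
  | add x y hx hy => simp [map_add, hx, hy]
  | tm n m =>
    rw [freeRcmp_mk, map_finsuppSum]
    have h1 : ∀ (s : S) (r : R),
        freeRinv S N (Finsupp.single s (op r • n))
          = NCTensor.mk R n (Finsupp.single s r) := by
      intro s r
      rw [freeRinv, Finsupp.lsum_single]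
      show NCTensor.mk R (op r • n) (Finsupp.single s (1 : R)) = _
      rw [NCTensor.mk_smul]
      congr 1
      rw [Finsupp.smul_single, smul_eq_mul, mul_one]
    rw [Finsupp.sum_congr (g2 := fun s r => NCTensor.mk R n (Finsupp.single s r))
      fun s _ => h1 s (m s)]
    have := map_finsuppSum (AddMonoidHom.mk' (fun m' : S →₀ R => NCTensor.mk R n m')
      (fun m' m'' => NCTensor.mk_add_right _ _ _)) m (fun s r => Finsupp.single s r)
    simp only [AddMonoidHom.mk'_apply] at this
    rw [← this, Finsupp.sum_single]

lemma freeRcmp_natural (S : Type u) {N N' : Type u} [AddCommGroup N] [Module Rᵐᵒᵖ N]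
    [AddCommGroup N'] [Module Rᵐᵒᵖ N'] (g : N →ₗ[Rᵐᵒᵖ] N') (x : NCTensor R N (S →₀ R)) :
    freeRcmp S N' (NCmapL R (S →₀ R) g x)
      = Finsupp.mapRange.linearMap g.toAddMonoidHom.toIntLinearMap (freeRcmp S N x) := by
  induction x using NCTensor.ind with
  | zero => simp
  | add x y hx hy => simp [map_add, hx, hy]
  | tm n m =>
    rw [NCmapL_mk, freeRcmp_mk, freeRcmp_mk, map_finsuppSum]
    refine Finsupp.sum_congr fun s _ => ?_
    simp [Finsupp.mapRange_single]

/-- tensoring a free left module preserves injectivity of right-module maps -/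
lemma NCmapL_injective_of_free (S : Type u) {N N' : Type u} [AddCommGroup N] [Module Rᵐᵒᵖ N]
    [AddCommGroup N'] [Module Rᵐᵒᵖ N'] (g : N →ₗ[Rᵐᵒᵖ] N') (hg : Function.Injective g) :
    Function.Injective (NCmapL R (S →₀ R) g) := by
  intro x y hxy
  have h1 : freeRcmp S N' (NCmapL R (S →₀ R) g x) = freeRcmp S N' (NCmapL R (S →₀ R) g y) := by
    rw [hxy]
  rw [freeRcmp_natural, freeRcmp_natural] at h1
  have h2 : freeRcmp S N x = freeRcmp S N y := by
    have : Function.Injective (Finsupp.mapRange.linearMap (M := N) (N := N') (α := S)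
        g.toAddMonoidHom.toIntLinearMap) := by
      intro u v huv
      ext s
      apply hg
      have := congrArg (fun w => w s) huv
      simpa using this
    exact this h1
  rw [← freeRinv_comp S N x, ← freeRinv_comp S N y, h2]

end free

section flatlemmas
variable {R : Type u} [Ring R]

lemma exact_subtype_ker {N P : Type u} [AddCommGroup N] [Module Rᵐᵒᵖ N] [AddCommGroup P]
    [Module Rᵐᵒᵖ P] (g : N →ₗ[Rᵐᵒᵖ] P) :
    Function.Exact (LinearMap.ker g).subtype g := by
  intro y
  constructor
  · intro h
    exact ⟨⟨y, h⟩, rfl⟩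
  · rintro ⟨⟨z, hz⟩, rfl⟩
    exact hz

lemma exact_subtype_ker' {N P : Type u} [AddCommGroup N] [Module R N] [AddCommGroup P]
    [Module R P] (g : N →ₗ[R] P) :
    Function.Exact (LinearMap.ker g).subtype g := by
  intro y
  constructor
  · intro h
    exact ⟨⟨y, h⟩, rfl⟩
  · rintro ⟨⟨z, hz⟩, rfl⟩
    exact hz

private lemma lemB_aux {A B C : Type u} [AddCommGroup A] [Module R A]
    [AddCommGroup B] [Module R B] [AddCommGroup C] [Module R C]
    (f : A →ₗ[R] B) (g : B →ₗ[R] C) (hf : Function.Injective f) (hfg : Function.Exact f g)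
    (hg : Function.Surjective g) (hC : FlatModule R C)
    {J N I : Type u} [AddCommGroup J] [Module Rᵐᵒᵖ J] [AddCommGroup N] [Module Rᵐᵒᵖ N]
    [AddCommGroup I] [Module Rᵐᵒᵖ I]
    (j : J →ₗ[Rᵐᵒᵖ] N) (π : N →ₗ[Rᵐᵒᵖ] I) (hjinj : Function.Injective j)
    (hjπ : Function.Exact j π) (hπ : Function.Surjective π)
    (hπj : π ∘ₗ j = 0)
    (hNfree : Function.Injective (NCmap R N f)) :
    Function.Injective (NCmap R I f) := by
  rw [injective_iff_map_eq_zero]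
  intro x hx
  obtain ⟨x', rfl⟩ := NCmapL_surjective (A := A) π hπ x
  have hy : NCmapL R B π (NCmap R N f x') = 0 := by
    have hsq := congrArg (fun h => h x') (NCmap_NCmapL_comm (N := N) (N' := I) f π)
    simp only [LinearMap.comp_apply] at hsq
    rw [← hsq]
    exact hx
  have hexL : Function.Exact (NCmapL R B j) (NCmapL R B π) := NCmapL_exact B j π hjπ hπ
  obtain ⟨z, hz⟩ := (hexL (NCmap R N f x')).mp hy
  have hzero : NCmap R J g z = 0 := by
    have hinj : Function.Injective (NCmapL R C j) := hC J N j hjinj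
    apply hinj
    rw [map_zero]
    have hsq := congrArg (fun h => h z) (NCmap_NCmapL_comm (N := J) (N' := N) g j)
    simp only [LinearMap.comp_apply] at hsq
    rw [← hsq, hz, ← LinearMap.comp_apply, ← NCmap_comp]
    have hgf : g ∘ₗ f = 0 := by
      ext a; simpa using hfg.apply_apply_eq_zero a
    rw [hgf, NCmap_zero, LinearMap.zero_apply]
  have hexJ : Function.Exact (NCmap R J f) (NCmap R J g) := NCmap_exact J f g hfg hg
  obtain ⟨w, hw⟩ := (hexJ z).mp hzero
  have hx'w : x' = NCmapL R A j w := by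
    apply hNfree
    have hsq := congrArg (fun h => h w) (NCmap_NCmapL_comm (N := J) (N' := N) f j)
    simp only [LinearMap.comp_apply] at hsq
    rw [hsq, hw, hz]
  rw [hx'w, ← LinearMap.comp_apply, ← NCmapL_comp, hπj, NCmapL_zero, LinearMap.zero_apply]

/-- Lemma B : if the cokernel of an injection is flat, then the injection stays injective
after tensoring with any right module. -/
theorem NCmap_injective_of_flat_cokernel {A B C : Type u} [AddCommGroup A] [Module R A]
    [AddCommGroup B] [Module R B] [AddCommGroup C] [Module R C]
    (f : A →ₗ[R] B) (g : B →ₗ[R] C) (hf : Function.Injective f) (hfg : Function.Exact f g)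
    (hg : Function.Surjective g) (hC : FlatModule R C)
    (I : Type u) [AddCommGroup I] [Module Rᵐᵒᵖ I] : Function.Injective (NCmap R I f) := by
  have hπ : Function.Surjective (Finsupp.linearCombination Rᵐᵒᵖ (id : I → I)) :=
    Finsupp.linearCombination_id_surjective Rᵐᵒᵖ I
  set π : (I →₀ Rᵐᵒᵖ) →ₗ[Rᵐᵒᵖ] I := Finsupp.linearCombination Rᵐᵒᵖ (id : I → I) with hπdef
  set J : Submodule Rᵐᵒᵖ (I →₀ Rᵐᵒᵖ) := LinearMap.ker π with hJdef
  have hNfree : Function.Injective (NCmap R (I →₀ Rᵐᵒᵖ) f) := NCmap_injective_of_free I f hf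
  refine lemB_aux f g hf hfg hg hC (J := J) (N := (I →₀ Rᵐᵒᵖ)) (I := I)
    J.subtype π (Submodule.injective_subtype J) ?_ hπ ?_ hNfree
  · exact exact_subtype_ker π
  · ext p
    exact p.2

/-- projective modules are flat -/
theorem flatModule_of_projective (P : Type u) [AddCommGroup P] [Module R P]
    (hP : Module.Projective R P) : FlatModule R P := by
  intro N N' _ _ _ _ g hg
  obtain ⟨s, hs⟩ := Module.projective_def.mp hP
  have hτs : (Finsupp.linearCombination R (id : P → P)) ∘ₗ s = LinearMap.id := by
    ext p; exact hs p
  have hfree : Function.Injective (NCmapL R (P →₀ R) g) := NCmapL_injective_of_free P g hg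
  intro x y hxy
  have h1 : NCmap R N s x = NCmap R N s y := by
    apply hfree
    have sq1 := congrArg (fun h => h x) (NCmap_NCmapL_comm (N := N) (N' := N') s g)
    have sq2 := congrArg (fun h => h y) (NCmap_NCmapL_comm (N := N) (N' := N') s g)
    simp only [LinearMap.comp_apply] at sq1 sq2
    rw [← sq1, ← sq2, hxy]
  have h2 : NCmap R N (Finsupp.linearCombination R (id : P → P)) (NCmap R N s x)
      = NCmap R N (Finsupp.linearCombination R (id : P → P)) (NCmap R N s y) := by rw [h1]
  rwa [← LinearMap.comp_apply, ← LinearMap.comp_apply, ← NCmap_comp, hτs, NCmap_id,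
    LinearMap.id_apply, LinearMap.id_apply] at h2

/-- a product of two flat modules is flat -/
theorem flatModule_prod {A B : Type u} [AddCommGroup A] [Module R A] [AddCommGroup B]
    [Module R B] (hA : FlatModule R A) (hB : FlatModule R B) : FlatModule R (A × B) := by
  intro N N' _ _ _ _ g hg
  intro x y hxy
  have hid : (LinearMap.inl R A B) ∘ₗ (LinearMap.fst R A B)
      + (LinearMap.inr R A B) ∘ₗ (LinearMap.snd R A B) = LinearMap.id := by
    ext p <;> simp
  have hfst : NCmap R N (LinearMap.fst R A B) x = NCmap R N (LinearMap.fst R A B) y := by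
    apply hA N N' g hg
    have sq1 := congrArg (fun h => h x)
      (NCmap_NCmapL_comm (N := N) (N' := N') (LinearMap.fst R A B) g)
    have sq2 := congrArg (fun h => h y)
      (NCmap_NCmapL_comm (N := N) (N' := N') (LinearMap.fst R A B) g)
    simp only [LinearMap.comp_apply] at sq1 sq2
    rw [← sq1, ← sq2, hxy]
  have hsnd : NCmap R N (LinearMap.snd R A B) x = NCmap R N (LinearMap.snd R A B) y := by
    apply hB N N' g hg
    have sq1 := congrArg (fun h => h x)
      (NCmap_NCmapL_comm (N := N) (N' := N') (LinearMap.snd R A B) g)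
    have sq2 := congrArg (fun h => h y)
      (NCmap_NCmapL_comm (N := N) (N' := N') (LinearMap.snd R A B) g)
    simp only [LinearMap.comp_apply] at sq1 sq2
    rw [← sq1, ← sq2, hxy]
  calc x = NCmap R N (LinearMap.id : A × B →ₗ[R] A × B) x := by rw [NCmap_id]; rfl
    _ = NCmap R N (LinearMap.inl R A B) (NCmap R N (LinearMap.fst R A B) x)
        + NCmap R N (LinearMap.inr R A B) (NCmap R N (LinearMap.snd R A B) x) := by
        rw [← hid, NCmap_add, NCmap_comp, NCmap_comp]; rfl
    _ = NCmap R N (LinearMap.inl R A B) (NCmap R N (LinearMap.fst R A B) y)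
        + NCmap R N (LinearMap.inr R A B) (NCmap R N (LinearMap.snd R A B) y) := by
        rw [hfst, hsnd]
    _ = NCmap R N (LinearMap.id : A × B →ₗ[R] A × B) y := by
        rw [← hid, NCmap_add, NCmap_comp, NCmap_comp]; rfl
    _ = y := by rw [NCmap_id]; rfl

/-- kernel of a surjection between flat modules is flat -/
theorem flatModule_of_ses {A B C : Type u} [AddCommGroup A] [Module R A] [AddCommGroup B]
    [Module R B] [AddCommGroup C] [Module R C]
    (f : A →ₗ[R] B) (g : B →ₗ[R] C) (hf : Function.Injective f) (hfg : Function.Exact f g)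
    (hg : Function.Surjective g) (hB : FlatModule R B) (hC : FlatModule R C) :
    FlatModule R A := by
  intro N N' _ _ _ _ q hq
  intro x y hxy
  have h1 : Function.Injective (NCmap R N f) :=
    NCmap_injective_of_flat_cokernel f g hf hfg hg hC N
  have h2 : Function.Injective (NCmapL R B q) := hB N N' q hq
  apply h1
  apply h2
  have sq1 := congrArg (fun h => h x) (NCmap_NCmapL_comm (N := N) (N' := N') f q)
  have sq2 := congrArg (fun h => h y) (NCmap_NCmapL_comm (N := N) (N' := N') f q)
  simp only [LinearMap.comp_apply] at sq1 sq2
  rw [← sq1, ← sq2, hxy]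

end flatlemmas

section util
variable {R : Type u} [Ring R]
variable (I : Type u) [AddCommGroup I] [Module Rᵐᵒᵖ I]
variable {A B C : Type u} [AddCommGroup A] [Module R A] [AddCommGroup B] [Module R B]
  [AddCommGroup C] [Module R C]

lemma NCmap_range_comp (f : B →ₗ[R] C) (g : A →ₗ[R] B) (hg : Function.Surjective g) :
    LinearMap.range (NCmap R I (f ∘ₗ g)) = LinearMap.range (NCmap R I f) := by
  rw [NCmap_comp]
  exact LinearMap.range_comp_of_range_eq_top _
    (LinearMap.range_eq_top.2 (NCmap_surjective g hg))

lemma NCmap_ker_comp (f : B →ₗ[R] C) (g : A →ₗ[R] B)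
    (hf : Function.Injective (NCmap R I f)) :
    LinearMap.ker (NCmap R I (f ∘ₗ g)) = LinearMap.ker (NCmap R I g) := by
  rw [NCmap_comp]
  exact LinearMap.ker_comp_of_ker_eq_bot _ (LinearMap.ker_eq_bot.2 hf)

lemma codRestrict_surjective (f : A →ₗ[R] B) (p : Submodule R B) (h : ∀ c, f c ∈ p)
    (hr : LinearMap.range f = p) : Function.Surjective (LinearMap.codRestrict p f h) := by
  rintro ⟨y, hy⟩
  rw [← hr] at hy
  obtain ⟨x, hx⟩ := hy
  exact ⟨x, Subtype.ext hx⟩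

end util

section adapted
variable {R : Type u} [Ring R]

/-- A flat resolution of `X` which stays exact (in the syzygy-wise sense) after
tensoring with the fixed right module `I`. -/
structure AdaptedChain (R : Type u) [Ring R] (I : Type u) [AddCommGroup I] [Module Rᵐᵒᵖ I]
    (X : Type u) [AddCommGroup X] [Module R X] : Type (u + 1) where
  C : ℕ → ModuleCat.{u} R
  G : ℕ → ModuleCat.{u} R
  e : X ≃ₗ[R] C 0
  flatG : ∀ n, FlatModule R (G n)
  i : ∀ n, C (n + 1) →ₗ[R] G n
  p : ∀ n, G n →ₗ[R] C n
  inj_i : ∀ n, Function.Injective (i n)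
  surj_p : ∀ n, Function.Surjective (p n)
  exact_ip : ∀ n, Function.Exact (i n) (p n)
  tensorInj : ∀ n, Function.Injective (NCmap R I (i n))

variable {I : Type u} [AddCommGroup I] [Module Rᵐᵒᵖ I]

/-- transport an adapted chain along a linear equivalence -/
noncomputable def AdaptedChain.congr {X Y : Type u} [AddCommGroup X] [Module R X]
    [AddCommGroup Y] [Module R Y] (A : AdaptedChain R I X) (e' : Y ≃ₗ[R] X) :
    AdaptedChain R I Y :=
  { A with e := e'.trans A.e }

/-- the shifted chain, adapted for the first syzygy -/
noncomputable def AdaptedChain.shift {X : Type u} [AddCommGroup X] [Module R X]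
    (A : AdaptedChain R I X) : AdaptedChain R I ↥(A.C 1) where
  C n := A.C (n + 1)
  G n := A.G (n + 1)
  e := LinearEquiv.refl R ↥(A.C 1)
  flatG n := A.flatG (n + 1)
  i n := A.i (n + 1)
  p n := A.p (n + 1)
  inj_i n := A.inj_i (n + 1)
  surj_p n := A.surj_p (n + 1)
  exact_ip n := A.exact_ip (n + 1)
  tensorInj n := A.tensorInj (n + 1)

end adapted

section step
variable {R : Type u} [Ring R]
variable {I : Type u} [AddCommGroup I] [Module Rᵐᵒᵖ I]

set_option maxHeartbeats 1600000 in
/-- The key dimension-shifting step: if `X` has an adapted flat chain and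
`0 → K → P → X → 0` is exact with `P` projective, then `I ⊗ K → I ⊗ P` is injective and
`K` again has an adapted flat chain. -/
theorem AdaptedChain.step {X : Type u} [AddCommGroup X] [Module R X] (A : AdaptedChain R I X)
    {K P : Type u} [AddCommGroup K] [Module R K] [AddCommGroup P] [Module R P]
    (hP : Module.Projective R P)
    (k : K →ₗ[R] P) (q : P →ₗ[R] X) (hk : Function.Injective k) (hq : Function.Surjective q)
    (hkq : Function.Exact k q) :
    Function.Injective (NCmap R I k) ∧ Nonempty (AdaptedChain R I K) := by
  classical
  -- the pullback Y of (G 0) → X ← P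
  let pX : ↥(A.G 0) →ₗ[R] X := (A.e.symm.toLinearMap) ∘ₗ A.p 0
  have hpX_surj : Function.Surjective pX := by
    intro x
    obtain ⟨g, hg⟩ := A.surj_p 0 (A.e x)
    exact ⟨g, by simp [pX, hg]⟩
  have hkerpX : LinearMap.ker pX = LinearMap.range (A.i 0) := by
    have h1 : LinearMap.ker pX = LinearMap.ker (A.p 0) :=
      LinearMap.ker_comp_of_ker_eq_bot (A.p 0)
        (LinearMap.ker_eq_bot.2 A.e.symm.injective)
    rw [h1, LinearMap.exact_iff.mp (A.exact_ip 0)]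
  let h0 : ↥(A.G 0) × P →ₗ[R] X := pX ∘ₗ LinearMap.fst R _ P - q ∘ₗ LinearMap.snd R _ P
  let Y : Submodule R (↥(A.G 0) × P) := LinearMap.ker h0
  have hmemY : ∀ v : ↥(A.G 0) × P, v ∈ Y ↔ pX v.1 = q v.2 := by
    intro v
    simp [Y, h0, LinearMap.mem_ker, sub_eq_zero]
  let qP : ↥Y →ₗ[R] P := LinearMap.snd R _ P ∘ₗ Y.subtype
  let qF : ↥Y →ₗ[R] ↥(A.G 0) := LinearMap.fst R _ P ∘ₗ Y.subtype
  have hqP_surj : Function.Surjective qP := by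
    intro p
    obtain ⟨g, hg⟩ := hpX_surj (q p)
    exact ⟨⟨(g, p), (hmemY _).2 hg⟩, rfl⟩
  have hqF_surj : Function.Surjective qF := by
    intro g
    obtain ⟨p, hp⟩ := hq (pX g)
    exact ⟨⟨(g, p), (hmemY _).2 hp.symm⟩, rfl⟩
  have hjKmem : ∀ c : K, ((0 : ↥(A.G 0)), k c) ∈ Y := by
    intro c
    refine (hmemY _).2 ?_
    simp [hkq.apply_apply_eq_zero c]
  let jK : K →ₗ[R] ↥Y :=
    LinearMap.codRestrict Y (LinearMap.prod 0 k) hjKmem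
  have hjK_inj : Function.Injective jK := by
    intro a b hab
    apply hk
    have := congrArg (fun y : ↥Y => (y : ↥(A.G 0) × P).2) hab
    exact this
  have hjK_qF : Function.Exact jK qF := by
    intro y
    constructor
    · intro hy
      have hyY := y.2
      rw [hmemY] at hyY
      have h2 : (y : ↥(A.G 0) × P).1 = 0 := hy
      rw [h2, map_zero] at hyY
      obtain ⟨c, hc⟩ := (hkq _).mp hyY.symm
      refine ⟨c, ?_⟩
      apply Subtype.ext
      have : ((0 : ↥(A.G 0)), k c) = (y : ↥(A.G 0) × P) := by
        rw [Prod.ext_iff]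
        exact ⟨h2.symm, hc⟩
      exact this
    · rintro ⟨c, rfl⟩
      rfl
  have hNCjK : Function.Injective (NCmap R I jK) :=
    NCmap_injective_of_flat_cokernel jK qF hjK_inj hjK_qF hqF_surj (A.flatG 0) I
  -- splitting of 0 → C 1 → Y → P → 0
  obtain ⟨s, hs⟩ := Module.projective_lifting_property (h := hP) qP LinearMap.id hqP_surj
  have hs' : ∀ p, qP (s p) = p := fun p => congrArg (fun h => h p) hs
  have hj1mem : ∀ c : ↥(A.C 1), ((A.i 0 c : ↥(A.G 0)), (0 : P)) ∈ Y := by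
    intro c
    refine (hmemY _).2 ?_
    have : A.p 0 (A.i 0 c) = 0 := (A.exact_ip 0).apply_apply_eq_zero c
    simp [pX, this]
  let j1 : ↥(A.C 1) →ₗ[R] ↥Y :=
    LinearMap.codRestrict Y (LinearMap.prod (A.i 0) 0) hj1mem
  have hj1_inj : Function.Injective j1 := by
    intro a b hab
    apply A.inj_i 0
    have := congrArg (fun y : ↥Y => (y : ↥(A.G 0) × P).1) hab
    exact this
  let δ : ↥Y →ₗ[R] ↥Y := LinearMap.id - s ∘ₗ qP
  have hδmem : ∀ y : ↥Y, qF (δ y) ∈ LinearMap.range (A.i 0) := by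
    intro y
    rw [← hkerpX, LinearMap.mem_ker]
    have h2 : qP (δ y) = 0 := by
      simp [δ, hs']
    have h3 := ((δ y).2 : (δ y : ↥(A.G 0) × P) ∈ Y)
    rw [hmemY] at h3
    have : pX (qF (δ y)) = q (qP (δ y)) := h3
    rw [this, h2, map_zero]
  let ρ : ↥Y →ₗ[R] ↥(A.C 1) :=
    (LinearEquiv.ofInjective (A.i 0) (A.inj_i 0)).symm.toLinearMap ∘ₗ
      LinearMap.codRestrict (LinearMap.range (A.i 0)) (qF ∘ₗ δ) hδmem
  have hi0ρ : ∀ y : ↥Y, A.i 0 (ρ y) = qF (δ y) := by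
    intro y
    show A.i 0 ((LinearEquiv.ofInjective (A.i 0) (A.inj_i 0)).symm
      (⟨qF (δ y), hδmem y⟩ : LinearMap.range (A.i 0))) = qF (δ y)
    have := (LinearEquiv.ofInjective (A.i 0) (A.inj_i 0)).apply_symm_apply
      (⟨qF (δ y), hδmem y⟩ : LinearMap.range (A.i 0))
    calc A.i 0 ((LinearEquiv.ofInjective (A.i 0) (A.inj_i 0)).symm ⟨qF (δ y), hδmem y⟩)
        = ((LinearEquiv.ofInjective (A.i 0) (A.inj_i 0))
            ((LinearEquiv.ofInjective (A.i 0) (A.inj_i 0)).symm ⟨qF (δ y), hδmem y⟩) :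
            LinearMap.range (A.i 0)) := rfl
      _ = qF (δ y) := by rw [this]
  have hsplit : ∀ y : ↥Y, j1 (ρ y) + s (qP y) = y := by
    intro y
    apply Subtype.ext
    rw [Prod.ext_iff]
    constructor
    · show A.i 0 (ρ y) + (s (qP y) : ↥(A.G 0) × P).1 = (y : ↥(A.G 0) × P).1
      rw [hi0ρ y]
      show (qF y - qF (s (qP y))) + _ = _
      have : qF (s (qP y)) = (s (qP y) : ↥(A.G 0) × P).1 := rfl
      rw [this, sub_add_cancel]
      rfl
    · show (0 : P) + (s (qP y) : ↥(A.G 0) × P).2 = (y : ↥(A.G 0) × P).2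
      rw [zero_add]
      exact hs' (qP y)
  have hρj1 : ∀ c, ρ (j1 c) = c := by
    intro c
    apply A.inj_i 0
    rw [hi0ρ]
    have h1 : qP (j1 c) = 0 := rfl
    show qF (j1 c - s (qP (j1 c))) = _
    rw [h1, map_zero, sub_zero]
    rfl
  -- first claim: NCmap R I k injective
  have hqPjK : qP ∘ₗ jK = k := by ext c; rfl
  have hqFjK : qF ∘ₗ jK = 0 := by ext c; rfl
  have hqFj1 : qF ∘ₗ j1 = A.i 0 := by ext c; rfl
  have hid : j1 ∘ₗ ρ + s ∘ₗ qP = LinearMap.id :=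
    LinearMap.ext fun y => hsplit y
  have hinjk : Function.Injective (NCmap R I k) := by
    rw [injective_iff_map_eq_zero]
    intro u hu
    set v := NCmap R I jK u with hv
    have hqPv : NCmap R I qP v = 0 := by
      rw [hv, ← LinearMap.comp_apply, ← NCmap_comp, hqPjK, hu]
    have hvsplit : v = NCmap R I j1 (NCmap R I ρ v) := by
      have := congrArg (fun h => h v) (congrArg (NCmap R I) hid)
      simp only [NCmap_add, NCmap_comp, NCmap_id, LinearMap.add_apply,
        LinearMap.comp_apply, LinearMap.id_apply] at this
      rw [hqPv, map_zero, add_zero] at this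
      exact this.symm
    have hqFv : NCmap R I qF v = 0 := by
      rw [hv, ← LinearMap.comp_apply, ← NCmap_comp, hqFjK, NCmap_zero,
        LinearMap.zero_apply]
    have ha : NCmap R I (A.i 0) (NCmap R I ρ v) = 0 := by
      have h1 : NCmap R I (A.i 0) (NCmap R I ρ v)
          = NCmap R I qF (NCmap R I j1 (NCmap R I ρ v)) := by
        rw [← LinearMap.comp_apply (NCmap R I qF), ← NCmap_comp, hqFj1]
      rw [h1, ← hvsplit]
      exact hqFv
    have ha0 : NCmap R I ρ v = 0 :=
      (injective_iff_map_eq_zero _).mp (A.tensorInj 0) _ ha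
    have hv0 : v = 0 := by
      rw [hvsplit, ha0, map_zero]
    exact (injective_iff_map_eq_zero _).mp hNCjK u hv0
  refine ⟨hinjk, ?_⟩
  -- construct the new adapted chain for K
  let Φ : ↥(A.C 1) × P →ₗ[R] ↥Y := j1 ∘ₗ LinearMap.fst R _ P + s ∘ₗ LinearMap.snd R _ P
  have hΦapply : ∀ cp : ↥(A.C 1) × P, Φ cp = j1 cp.1 + s cp.2 := fun cp => rfl
  let θ' : ↥(A.G 1) × P →ₗ[R] ↥Y := Φ ∘ₗ LinearMap.prodMap (A.p 1) LinearMap.id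
  have hθ'apply : ∀ gp : ↥(A.G 1) × P, θ' gp = j1 (A.p 1 gp.1) + s gp.2 := fun gp => rfl
  have hθ'_surj : Function.Surjective θ' := by
    intro y
    obtain ⟨g, hg⟩ := A.surj_p 1 (ρ y)
    refine ⟨(g, qP y), ?_⟩
    rw [hθ'apply]
    simp only [hg]
    exact hsplit y
  let θ : ↥(A.G 1) × P →ₗ[R] ↥(A.G 0) := qF ∘ₗ θ'
  have hθ_surj : Function.Surjective θ := by
    have : ⇑θ = ⇑qF ∘ ⇑θ' := rfl
    rw [this]
    exact hqF_surj.comp hθ'_surj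
  let B : Submodule R (↥(A.G 1) × P) := LinearMap.ker θ
  have hHflat : FlatModule R (↥(A.G 1) × P) :=
    flatModule_prod (A.flatG 1) (flatModule_of_projective P hP)
  have hBflat : FlatModule R ↥B :=
    flatModule_of_ses B.subtype θ (Submodule.injective_subtype B)
      (exact_subtype_ker' θ) hθ_surj hHflat (A.flatG 0)
  have hqPj1 : ∀ c, qP (j1 c) = 0 := fun c => rfl
  have hkerθ' : ∀ gp : ↥(A.G 1) × P, θ' gp = 0 ↔ (A.p 1 gp.1 = 0 ∧ gp.2 = 0) := by
    intro gp
    constructor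
    · intro h
      have h2 : qP (θ' gp) = 0 := by rw [h, map_zero]
      rw [hθ'apply, map_add, hqPj1, hs', zero_add] at h2
      have h3 : θ' gp = j1 (A.p 1 gp.1) := by
        rw [hθ'apply, h2, map_zero, add_zero]
      rw [h3] at h
      refine ⟨hj1_inj ?_, h2⟩
      rw [h, map_zero]
    · rintro ⟨h1, h2⟩
      rw [hθ'apply, h1, h2, map_zero, map_zero, add_zero]
  have hiimem : ∀ c : ↥(A.C 2), (LinearMap.prod (A.i 1) 0) c ∈ B := by
    intro c
    show qF (θ' ((A.i 1) c, 0)) = 0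
    have h1 : θ' ((A.i 1) c, (0 : P)) = 0 :=
      (hkerθ' _).2 ⟨(A.exact_ip 1).apply_apply_eq_zero c, rfl⟩
    rw [h1, map_zero]
  let ii : ↥(A.C 2) →ₗ[R] ↥B := LinearMap.codRestrict B (LinearMap.prod (A.i 1) 0) hiimem
  have hii_inj : Function.Injective ii := by
    intro a b hab
    apply A.inj_i 1
    have := congrArg (fun y : ↥B => (y : ↥(A.G 1) × P).1) hab
    simpa [ii] using this
  have hkerqF : LinearMap.ker qF = LinearMap.range jK := LinearMap.exact_iff.mp hjK_qF
  have hβmem : ∀ b : ↥B, θ' (B.subtype b) ∈ LinearMap.range jK := by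
    intro b
    rw [← hkerqF, LinearMap.mem_ker]
    exact b.2
  let β : ↥B →ₗ[R] K := (LinearEquiv.ofInjective jK hjK_inj).symm.toLinearMap ∘ₗ
    LinearMap.codRestrict (LinearMap.range jK) (θ' ∘ₗ B.subtype) hβmem
  have hjKβ : ∀ b : ↥B, jK (β b) = θ' (B.subtype b) := by
    intro b
    show jK ((LinearEquiv.ofInjective jK hjK_inj).symm
      (⟨θ' (B.subtype b), hβmem b⟩ : LinearMap.range jK)) = θ' (B.subtype b)
    have h1 := (LinearEquiv.ofInjective jK hjK_inj).apply_symm_apply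
      (⟨θ' (B.subtype b), hβmem b⟩ : LinearMap.range jK)
    calc jK ((LinearEquiv.ofInjective jK hjK_inj).symm ⟨θ' (B.subtype b), hβmem b⟩)
        = ((LinearEquiv.ofInjective jK hjK_inj)
            ((LinearEquiv.ofInjective jK hjK_inj).symm ⟨θ' (B.subtype b), hβmem b⟩) :
            LinearMap.range jK) := rfl
      _ = θ' (B.subtype b) := by rw [h1]
  have hβ_surj : Function.Surjective β := by
    intro c
    obtain ⟨h, hh⟩ := hθ'_surj (jK c)
    have hmem : h ∈ B := by
      show qF (θ' h) = 0
      rw [hh]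
      rfl
    refine ⟨⟨h, hmem⟩, ?_⟩
    apply hjK_inj
    rw [hjKβ]
    exact hh
  have hexact_iiβ : Function.Exact ii β := by
    intro b
    constructor
    · intro hb
      have h1 : θ' (B.subtype b) = 0 := by rw [← hjKβ b, hb, map_zero]
      obtain ⟨h2, h3⟩ := (hkerθ' _).1 h1
      obtain ⟨c, hc⟩ := ((A.exact_ip 1) _).mp h2
      refine ⟨c, ?_⟩
      apply Subtype.ext
      rw [Prod.ext_iff]
      exact ⟨hc, h3.symm⟩
    · rintro ⟨c, rfl⟩
      apply hjK_inj
      rw [hjKβ, map_zero]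
      show θ' ((A.i 1) c, (0 : P)) = 0
      exact (hkerθ' _).2 ⟨(A.exact_ip 1).apply_apply_eq_zero c, rfl⟩
  have hcomp : (LinearMap.fst R (↥(A.G 1)) P ∘ₗ B.subtype) ∘ₗ ii = A.i 1 := by
    ext c
    rfl
  have hNCii : Function.Injective (NCmap R I ii) := by
    have hinj1 : Function.Injective
        (NCmap R I ((LinearMap.fst R (↥(A.G 1)) P ∘ₗ B.subtype) ∘ₗ ii)) := by
      rw [hcomp]
      exact A.tensorInj 1
    rw [NCmap_comp, LinearMap.coe_comp] at hinj1
    exact hinj1.of_comp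
  exact ⟨{
    C := fun n => match n with | 0 => ModuleCat.of R K | (m+1) => A.C (m+2)
    G := fun n => match n with | 0 => ModuleCat.of R ↥B | (m+1) => A.G (m+2)
    e := LinearEquiv.refl R K
    flatG := fun n => match n with | 0 => hBflat | (m+1) => A.flatG (m+2)
    i := fun n => match n with | 0 => ii | (m+1) => A.i (m+2)
    p := fun n => match n with | 0 => β | (m+1) => A.p (m+2)
    inj_i := fun n => match n with | 0 => hii_inj | (m+1) => A.inj_i (m+2)
    surj_p := fun n => match n with | 0 => hβ_surj | (m+1) => A.surj_p (m+2)
    exact_ip := fun n => match n with | 0 => hexact_iiβ | (m+1) => A.exact_ip (m+2)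
    tensorInj := fun n => match n with | 0 => hNCii | (m+1) => A.tensorInj (m+2) }⟩

end step

section torvanish
variable {R : Type u} [Ring R] {I : Type u} [AddCommGroup I] [Module Rᵐᵒᵖ I]

set_option maxHeartbeats 800000 in
/-- A module with an adapted chain has vanishing `Tor_i(I, -)` for `i ≥ 1`, computed with
respect to any projective resolution. -/
theorem adapted_tor_vanish {X : Type u} [AddCommGroup X] [Module R X]
    (A : AdaptedChain R I X)
    (P : ℕ → ModuleCat.{u} R) (d : ∀ i, P (i + 1) →ₗ[R] P i) (ε : P 0 →ₗ[R] X)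
    (hproj : ∀ i, Module.Projective R (P i)) (hsurj : Function.Surjective ε)
    (hd0 : Function.Exact (d 0) ε) (hdd : ∀ i, Function.Exact (d (i + 1)) (d i)) :
    ∀ j, Function.Exact (NCmap R I (d (j + 1))) (NCmap R I (d j)) := by
  classical
  let K : ∀ j : ℕ, Submodule R ↥(P j) := fun j =>
    match j with
    | 0 => LinearMap.ker ε
    | (j + 1) => LinearMap.ker (d j)
  have hmem : ∀ j x, d j x ∈ K j := fun j =>
    match j with
    | 0 => fun x => hd0.apply_apply_eq_zero x
    | (j + 1) => fun x => (hdd j).apply_apply_eq_zero x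
  have hrange : ∀ j, LinearMap.range (d j) = K j := fun j =>
    match j with
    | 0 => (LinearMap.exact_iff.mp hd0).symm
    | (j + 1) => (LinearMap.exact_iff.mp (hdd j)).symm
  let σ : ∀ j, ↥(P (j + 1)) →ₗ[R] ↥(K j) := fun j =>
    LinearMap.codRestrict (K j) (d j) (hmem j)
  have hσ_surj : ∀ j, Function.Surjective (σ j) := fun j =>
    codRestrict_surjective (d j) (K j) (hmem j) (hrange j)
  have hexactKσ : ∀ j, Function.Exact (K (j + 1)).subtype (σ j) := by
    intro j y
    constructor
    · intro h
      have h2 : d j y = 0 := congrArg Subtype.val h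
      exact ⟨⟨y, h2⟩, rfl⟩
    · rintro ⟨⟨z, hz⟩, rfl⟩
      exact Subtype.ext hz
  have main : ∀ j, Function.Injective (NCmap R I (K j).subtype)
      ∧ Nonempty (AdaptedChain R I ↥(K j)) := by
    intro j
    induction j with
    | zero =>
      exact A.step (hproj 0) (K 0).subtype ε (Submodule.injective_subtype _) hsurj
        (exact_subtype_ker' ε)
    | succ j ih =>
      obtain ⟨hj, ⟨Aj⟩⟩ := ih
      exact Aj.step (hproj (j + 1)) (K (j + 1)).subtype (σ j)
        (Submodule.injective_subtype _) (hσ_surj j) (hexactKσ j)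
  have hd_decomp : ∀ j, (K j).subtype ∘ₗ σ j = d j := fun j =>
    LinearMap.subtype_comp_codRestrict (d j) (K j) (hmem j)
  intro j
  rw [LinearMap.exact_iff]
  calc LinearMap.ker (NCmap R I (d j))
      = LinearMap.ker (NCmap R I ((K j).subtype ∘ₗ σ j)) := by rw [hd_decomp j]
    _ = LinearMap.ker (NCmap R I (σ j)) := NCmap_ker_comp I _ _ (main j).1
    _ = LinearMap.range (NCmap R I (K (j + 1)).subtype) :=
        LinearMap.exact_iff.mp (NCmap_exact I _ _ (hexactKσ j) (hσ_surj j))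
    _ = LinearMap.range (NCmap R I ((K (j + 1)).subtype ∘ₗ σ (j + 1))) :=
        (NCmap_range_comp I _ _ (hσ_surj (j + 1))).symm
    _ = LinearMap.range (NCmap R I (d (j + 1))) := by rw [hd_decomp (j + 1)]

end torvanish
section GDefs
variable (R : Type u) [Ring R]

/-- A complete flat resolution witnessing that `M` is a Gorenstein flat left `R`-module:
an exact sequence `⋯ → F₂ → F₁ → F₀ → F₋₁ → ⋯` of flat left `R`-modules with
`M ≅ Im(F₀ → F₋₁)` which stays exact after applying `I ⊗_R -` for every injective right
`R`-module `I`. -/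
structure CompleteFlatResolution (M : Type u) [AddCommGroup M] [Module R M] :
    Type (u + 1) where
  F : ℤ → ModuleCat.{u} R
  d : ∀ z : ℤ, F (z + 1) →ₗ[R] F z
  flat : ∀ z, FlatModule R (F z)
  exact : ∀ z, Function.Exact (d (z + 1)) (d z)
  iso : Nonempty (M ≃ₗ[R] LinearMap.range (d (-1)))
  tensorExact : ∀ (I : Type u) [AddCommGroup I] [Module Rᵐᵒᵖ I], Module.Injective Rᵐᵒᵖ I →
    ∀ z, Function.Exact (NCmap R I (d (z + 1))) (NCmap R I (d z))

/-- A left `R`-module is Gorenstein flat if it admits a complete flat resolution. -/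
def IsGorensteinFlat (M : Type u) [AddCommGroup M] [Module R M] : Prop :=
  Nonempty (CompleteFlatResolution R M)

/-- A complete projective resolution witnessing that `M` is a Gorenstein projective left
`R`-module. -/
structure CompleteProjResolution (M : Type u) [AddCommGroup M] [Module R M] :
    Type (u + 1) where
  P : ℤ → ModuleCat.{u} R
  d : ∀ z : ℤ, P (z + 1) →ₗ[R] P z
  proj : ∀ z, Module.Projective R (P z)
  exact : ∀ z, Function.Exact (d (z + 1)) (d z)
  iso : Nonempty (M ≃ₗ[R] LinearMap.range (d (-1)))
  homExact : ∀ (Q : Type u) [AddCommGroup Q] [Module R Q], Module.Projective R Q →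
    ∀ z, Function.Exact (fun g : P z →ₗ[R] Q => g.comp (d z))
      (fun g : P (z + 1) →ₗ[R] Q => g.comp (d (z + 1)))

/-- A left `R`-module is Gorenstein projective if it admits a complete projective
resolution. -/
def IsGorensteinProjective (M : Type u) [AddCommGroup M] [Module R M] : Prop :=
  Nonempty (CompleteProjResolution R M)

/-- `gfdLE R n M` : the Gorenstein flat dimension of the left `R`-module `M` is at most
`n`, i.e. `M` has a resolution of length `n` by Gorenstein flat modules. -/
def gfdLE : ℕ → ModuleCat.{u} R → Prop
  | 0, M => IsGorensteinFlat R M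
  | n + 1, M => ∃ (G : ModuleCat.{u} R) (f : G →ₗ[R] M), Function.Surjective f ∧
      IsGorensteinFlat R G ∧ gfdLE n (ModuleCat.of R (LinearMap.ker f))

/-- `gpdLE R n M` : the Gorenstein projective dimension of `M` is at most `n`. -/
def gpdLE : ℕ → ModuleCat.{u} R → Prop
  | 0, M => IsGorensteinProjective R M
  | n + 1, M => ∃ (G : ModuleCat.{u} R) (f : G →ₗ[R] M), Function.Surjective f ∧
      IsGorensteinProjective R G ∧ gpdLE n (ModuleCat.of R (LinearMap.ker f))

/-- `fdLE R n M` : the flat dimension of `M` is at most `n`. -/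
def fdLE : ℕ → ModuleCat.{u} R → Prop
  | 0, M => FlatModule R M
  | n + 1, M => ∃ (G : ModuleCat.{u} R) (f : G →ₗ[R] M), Function.Surjective f ∧
      FlatModule R G ∧ fdLE n (ModuleCat.of R (LinearMap.ker f))

/-- `pdLE R n M` : the projective dimension of `M` is at most `n`. -/
def pdLE : ℕ → ModuleCat.{u} R → Prop
  | 0, M => Module.Projective R M
  | n + 1, M => ∃ (G : ModuleCat.{u} R) (f : G →ₗ[R] M), Function.Surjective f ∧
      Module.Projective R G ∧ pdLE n (ModuleCat.of R (LinearMap.ker f))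

/-- `idLE R n M` : the injective dimension of `M` is at most `n`. -/
def idLE : ℕ → ModuleCat.{u} R → Prop
  | 0, M => Module.Injective R M
  | n + 1, M => ∃ (I : ModuleCat.{u} R) (f : M →ₗ[R] I), Function.Injective f ∧
      Module.Injective R I ∧ idLE n (ModuleCat.of R (I ⧸ LinearMap.range f))

/-- Gorenstein flat dimension, valued in `ℕ∞`. -/
noncomputable def gfDim (M : ModuleCat.{u} R) : ℕ∞ :=
  sInf {n : ℕ∞ | ∃ k : ℕ, n = k ∧ gfdLE R k M}

/-- Flat dimension, valued in `ℕ∞`. -/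
noncomputable def flatDim (M : ModuleCat.{u} R) : ℕ∞ :=
  sInf {n : ℕ∞ | ∃ k : ℕ, n = k ∧ fdLE R k M}

/-- Injective dimension, valued in `ℕ∞`. -/
noncomputable def injDim (M : ModuleCat.{u} R) : ℕ∞ :=
  sInf {n : ℕ∞ | ∃ k : ℕ, n = k ∧ idLE R k M}

/-- The (left) weak Gorenstein global dimension of `R`:
the supremum of Gorenstein flat dimensions of all left `R`-modules. -/
noncomputable def wGgldim : ℕ∞ :=
  ⨆ M : ModuleCat.{u} R, gfDim R M

/-- `IFD R` : the supremum of flat dimensions of injective left `R`-modules. -/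
noncomputable def IFD : ℕ∞ :=
  ⨆ M : ModuleCat.{u} R, ⨆ (_ : Module.Injective R M), flatDim R M

/-- A ring is left coherent if every finitely generated left ideal is finitely
presented. -/
def LeftCoherent : Prop :=
  ∀ I : Submodule R R, I.FG → Module.FinitePresentation R I

/-- A ring is right coherent if every finitely generated right ideal is finitely
presented; right ideals are viewed as left ideals of `Rᵐᵒᵖ`. -/
def RightCoherent : Prop := LeftCoherent Rᵐᵒᵖ

end GDefs

/-- `TorVanishGT R n I M` : `Tor_i^R(I, M) = 0` for all `i > n`, expressed by saying that
for every projective resolution `P• → M` of left modules, the complex `I ⊗_R P•` obtained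
by tensoring with the right module `I` is exact at every spot of index `> n`. -/
noncomputable def TorVanishGT (R : Type u) [Ring R] (n : ℕ) (I : Type u) [AddCommGroup I]
    [Module Rᵐᵒᵖ I] (M : ModuleCat.{u} R) : Prop :=
  ∀ (P : ℕ → ModuleCat.{u} R) (d : ∀ i, P (i + 1) →ₗ[R] P i) (ε : P 0 →ₗ[R] M),
    (∀ i, Module.Projective R (P i)) → Function.Surjective ε →
    Function.Exact (d 0) ε → (∀ i, Function.Exact (d (i + 1)) (d i)) →
    ∀ j, n ≤ j → Function.Exact (NCmap R I (d (j + 1))) (NCmap R I (d j))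

section completeforward
variable {R : Type u} [Ring R]

lemma NCmap_equiv_bijective {N : Type u} [AddCommGroup N] [Module Rᵐᵒᵖ N]
    {A B : Type u} [AddCommGroup A] [Module R A] [AddCommGroup B] [Module R B]
    (e : A ≃ₗ[R] B) : Function.Bijective (NCmap R N e.toLinearMap) := by
  have h1 : NCmap R N e.symm.toLinearMap ∘ₗ NCmap R N e.toLinearMap = LinearMap.id := by
    rw [← NCmap_comp]
    have h : e.symm.toLinearMap ∘ₗ e.toLinearMap = LinearMap.id := by
      ext a; simp
    rw [h, NCmap_id]
  have h2 : NCmap R N e.toLinearMap ∘ₗ NCmap R N e.symm.toLinearMap = LinearMap.id := by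
    rw [← NCmap_comp]
    have h : e.toLinearMap ∘ₗ e.symm.toLinearMap = LinearMap.id := by
      ext a; simp
    rw [h, NCmap_id]
  constructor
  · intro x y hxy
    have := congrArg (NCmap R N e.symm.toLinearMap) hxy
    rwa [← LinearMap.comp_apply, ← LinearMap.comp_apply, h1, LinearMap.id_apply,
      LinearMap.id_apply] at this
  · intro y
    refine ⟨NCmap R N e.symm.toLinearMap y, ?_⟩
    rw [← LinearMap.comp_apply, h2, LinearMap.id_apply]

lemma exact_range_subtype_rangeRestrict {A2 A1 A0 : Type u} [AddCommGroup A2] [Module R A2]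
    [AddCommGroup A1] [Module R A1] [AddCommGroup A0] [Module R A0]
    (d1 : A2 →ₗ[R] A1) (d0 : A1 →ₗ[R] A0) (h : Function.Exact d1 d0) :
    Function.Exact (LinearMap.range d1).subtype d0.rangeRestrict := by
  intro y
  constructor
  · intro hy
    have h2 : d0 y = 0 := congrArg Subtype.val hy
    obtain ⟨w, hw⟩ := (h y).mp h2
    exact ⟨⟨y, ⟨w, hw⟩⟩, rfl⟩
  · rintro ⟨⟨z, ⟨w, rfl⟩⟩, rfl⟩
    apply Subtype.ext
    exact h.apply_apply_eq_zero w

/-- tensoring the inclusion of a syzygy of a complete flat resolution with an injective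
right module is injective -/
lemma CompleteFlatResolution.tensorInj_syzygy {M : Type u} [AddCommGroup M] [Module R M]
    (F : CompleteFlatResolution R M) (I : Type u) [AddCommGroup I] [Module Rᵐᵒᵖ I]
    (hI : Module.Injective Rᵐᵒᵖ I) (z : ℤ) :
    Function.Injective (NCmap R I (LinearMap.range (F.d z)).subtype) := by
  rw [injective_iff_map_eq_zero]
  intro u hu
  have hπ : Function.Surjective ((F.d z).rangeRestrict) :=
    LinearMap.surjective_rangeRestrict (F.d z)
  obtain ⟨u', rfl⟩ := NCmap_surjective (N := I) _ hπ u
  have h1 : NCmap R I (F.d z) u' = 0 := by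
    have hdec : (LinearMap.range (F.d z)).subtype ∘ₗ (F.d z).rangeRestrict = F.d z := rfl
    rw [← hdec, NCmap_comp, LinearMap.comp_apply]
    exact hu
  obtain ⟨w, hw⟩ := (F.tensorExact I hI z _).mp h1
  have h2 : (F.d z).rangeRestrict ∘ₗ F.d (z + 1) = 0 := by
    ext x
    show ((F.d z).rangeRestrict (F.d (z + 1) x) : ↥(F.F z)) = 0
    have h3 : F.d z (F.d (z + 1) x) = 0 := (F.exact z).apply_apply_eq_zero x
    exact h3
  rw [← hw, ← LinearMap.comp_apply, ← NCmap_comp, h2, NCmap_zero, LinearMap.zero_apply]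

/-- a complete flat resolution yields an adapted chain over any injective right module -/
noncomputable def CompleteFlatResolution.toAdapted {M : Type u} [AddCommGroup M] [Module R M]
    (F : CompleteFlatResolution R M) (I : Type u) [AddCommGroup I] [Module Rᵐᵒᵖ I]
    (hI : Module.Injective Rᵐᵒᵖ I) : AdaptedChain R I M where
  C n := match n with
    | 0 => ModuleCat.of R ↥(LinearMap.range (F.d (-1)))
    | (m + 1) => ModuleCat.of R ↥(LinearMap.range (F.d (m : ℤ)))
  G n := F.F (n : ℤ)
  e := F.iso.some
  flatG n := F.flat (n : ℤ)
  i n := (LinearMap.range (F.d (n : ℤ))).subtype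
  p n := by
    cases n with
    | zero => exact (F.d (-1)).rangeRestrict
    | succ m => exact (F.d (m : ℤ)).rangeRestrict
  inj_i n := Submodule.injective_subtype _
  surj_p n := by
    cases n with
    | zero => exact LinearMap.surjective_rangeRestrict (F.d (-1))
    | succ m => exact LinearMap.surjective_rangeRestrict (F.d (m : ℤ))
  exact_ip n := by
    cases n with
    | zero =>
      exact exact_range_subtype_rangeRestrict (F.d (-1 + 1)) (F.d (-1)) (F.exact (-1))
    | succ m =>
      exact exact_range_subtype_rangeRestrict (F.d ((m : ℤ) + 1)) (F.d (m : ℤ))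
        (F.exact (m : ℤ))
  tensorInj n := F.tensorInj_syzygy I hI (n : ℤ)

end completeforward

section forward
variable {R : Type u} [Ring R]

theorem complete_torVanish {M : ModuleCat.{u} R} (F : CompleteFlatResolution R ↥M)
    (I : Type u) [AddCommGroup I] [Module Rᵐᵒᵖ I] (hI : Module.Injective Rᵐᵒᵖ I) :
    TorVanishGT R 0 I M := by
  intro P d ε hproj hsurj hd0 hdd j _
  exact adapted_tor_vanish (F.toAdapted I hI) P d ε hproj hsurj hd0 hdd j

theorem complete_coresolution {M : ModuleCat.{u} R} (F : CompleteFlatResolution R ↥M) :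
    ∃ (Fc : ℕ → ModuleCat.{u} R) (d : ∀ i, Fc i →ₗ[R] Fc (i + 1)) (ι : ↥M →ₗ[R] Fc 0),
      (∀ i, FlatModule R ↥(Fc i)) ∧ Function.Injective ι ∧ Function.Exact ι (d 0) ∧
      (∀ i, Function.Exact (d i) (d (i + 1))) ∧
      (∀ (I : Type u) [AddCommGroup I] [Module Rᵐᵒᵖ I], Module.Injective Rᵐᵒᵖ I →
        Function.Injective (NCmap R I ι) ∧
        Function.Exact (NCmap R I ι) (NCmap R I (d 0)) ∧
        ∀ i, Function.Exact (NCmap R I (d i)) (NCmap R I (d (i + 1)))) := by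
  classical
  obtain ⟨e⟩ := F.iso
  refine ⟨fun i => F.F (Int.negSucc i), fun i => F.d (Int.negSucc (i + 1)),
    (LinearMap.range (F.d (-1))).subtype ∘ₗ e.toLinearMap, ?_, ?_, ?_, ?_, ?_⟩
  · exact fun i => F.flat (Int.negSucc i)
  · exact (Submodule.injective_subtype _).comp e.injective
  · rw [LinearMap.exact_iff]
    have h1 : LinearMap.range ((LinearMap.range (F.d (-1))).subtype ∘ₗ e.toLinearMap)
        = LinearMap.range (LinearMap.range (F.d (-1))).subtype := by
      apply LinearMap.range_comp_of_range_eq_top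
      exact LinearMap.range_eq_top.2 e.surjective
    rw [h1, Submodule.range_subtype]
    exact LinearMap.exact_iff.mp (F.exact (Int.negSucc 1))
  · exact fun i => F.exact (Int.negSucc (i + 2))
  · intro I _ _ hI
    refine ⟨?_, ?_, ?_⟩
    · intro x y hxy
      rw [NCmap_comp, LinearMap.comp_apply, LinearMap.comp_apply] at hxy
      exact (NCmap_equiv_bijective e).1 (F.tensorInj_syzygy I hI (-1) hxy)
    · rw [LinearMap.exact_iff]
      have h1 : LinearMap.range (NCmap R I ((LinearMap.range (F.d (-1))).subtype
            ∘ₗ e.toLinearMap))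
          = LinearMap.range (NCmap R I (LinearMap.range (F.d (-1))).subtype) :=
        NCmap_range_comp I _ _ e.surjective
      rw [h1]
      have h2 : LinearMap.ker (NCmap R I (F.d (Int.negSucc 1)))
          = LinearMap.range (NCmap R I (F.d (Int.negSucc 0))) :=
        LinearMap.exact_iff.mp (F.tensorExact I hI (Int.negSucc 1))
      rw [h2]
      have h3 : F.d (Int.negSucc 0) = (LinearMap.range (F.d (-1))).subtype
          ∘ₗ (F.d (-1)).rangeRestrict := rfl
      rw [h3]
      exact NCmap_range_comp I _ _ (LinearMap.surjective_rangeRestrict (F.d (-1)))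
    · exact fun i => F.tensorExact I hI (Int.negSucc (i + 2))

end forward

section converse
variable {R : Type u} [Ring R]

/-- iterated syzygies of a free resolution -/
noncomputable def FRes (M : ModuleCat.{u} R) : ℕ → ModuleCat.{u} R
  | 0 => M
  | (n + 1) => ModuleCat.of R ↥(LinearMap.ker
      (Finsupp.linearCombination R (id : ↥(FRes M n) → ↥(FRes M n))))

/-- the free modules of the free resolution -/
noncomputable def FP (M : ModuleCat.{u} R) (n : ℕ) : ModuleCat.{u} R :=
  ModuleCat.of R (↥(FRes M n) →₀ R)

/-- the augmentations of the free resolution -/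
noncomputable def Feps (M : ModuleCat.{u} R) (n : ℕ) : ↥(FP M n) →ₗ[R] ↥(FRes M n) :=
  Finsupp.linearCombination R id

lemma Feps_surj (M : ModuleCat.{u} R) (n : ℕ) : Function.Surjective (Feps M n) :=
  Finsupp.linearCombination_id_surjective R _

/-- the differentials of the free resolution -/
noncomputable def Fd (M : ModuleCat.{u} R) (n : ℕ) : ↥(FP M (n + 1)) →ₗ[R] ↥(FP M n) :=
  (LinearMap.ker
      (Finsupp.linearCombination R (id : ↥(FRes M n) → ↥(FRes M n)))).subtype ∘ₗ Feps M (n + 1)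

lemma FP_projective (M : ModuleCat.{u} R) (n : ℕ) : Module.Projective R ↥(FP M n) :=
  inferInstanceAs (Module.Projective R (↥(FRes M n) →₀ R))

lemma Fd_range (M : ModuleCat.{u} R) (n : ℕ) :
    LinearMap.range (Fd M n) = LinearMap.ker (Feps M n) := by
  rw [Fd]
  exact (LinearMap.range_comp_of_range_eq_top _ (LinearMap.range_eq_top.2 (Feps_surj M (n + 1)))).trans
    (Submodule.range_subtype _)

lemma Fd_ker (M : ModuleCat.{u} R) (n : ℕ) :
    LinearMap.ker (Fd M n) = LinearMap.ker (Feps M (n + 1)) := by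
  rw [Fd]
  exact LinearMap.ker_comp_of_ker_eq_bot _
    (Submodule.ker_subtype _)

lemma Fexact0 (M : ModuleCat.{u} R) : Function.Exact (Fd M 0) (Feps M 0) := by
  rw [LinearMap.exact_iff, Fd_range]

lemma Fexact (M : ModuleCat.{u} R) (n : ℕ) : Function.Exact (Fd M (n + 1)) (Fd M n) := by
  rw [LinearMap.exact_iff, Fd_range, Fd_ker]

/-- assemble a complete flat resolution from the converse data -/
noncomputable def converseBuild (M : ModuleCat.{u} R)
    (h1 : ∀ (I : Type u) [AddCommGroup I] [Module Rᵐᵒᵖ I], Module.Injective Rᵐᵒᵖ I →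
      TorVanishGT R 0 I M)
    (Fc : ℕ → ModuleCat.{u} R) (dc : ∀ i, Fc i →ₗ[R] Fc (i + 1)) (ι : ↥M →ₗ[R] Fc 0)
    (hflat : ∀ i, FlatModule R ↥(Fc i)) (hι : Function.Injective ι)
    (hexι : Function.Exact ι (dc 0)) (hexc : ∀ i, Function.Exact (dc i) (dc (i + 1)))
    (htens : ∀ (I : Type u) [AddCommGroup I] [Module Rᵐᵒᵖ I], Module.Injective Rᵐᵒᵖ I →
      Function.Injective (NCmap R I ι) ∧
      Function.Exact (NCmap R I ι) (NCmap R I (dc 0)) ∧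
      ∀ i, Function.Exact (NCmap R I (dc i)) (NCmap R I (dc (i + 1)))) :
    CompleteFlatResolution R ↥M where
  F z := match z with
    | Int.ofNat n => FP M n
    | Int.negSucc n => Fc n
  d z := match z with
    | Int.ofNat n => Fd M n
    | Int.negSucc 0 => ι ∘ₗ Feps M 0
    | Int.negSucc (n + 1) => dc n
  flat z := by
    cases z with
    | ofNat n => exact flatModule_of_projective _ (FP_projective M n)
    | negSucc n => exact hflat n
  exact z := by
    match z with
    | Int.ofNat n => exact Fexact M n
    | Int.negSucc 0 =>
      rw [LinearMap.exact_iff]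
      show LinearMap.ker (ι ∘ₗ Feps M 0) = LinearMap.range (Fd M 0)
      exact (LinearMap.ker_comp_of_ker_eq_bot _ (LinearMap.ker_eq_bot.2 hι)).trans
        (LinearMap.exact_iff.mp (Fexact0 M))
    | Int.negSucc 1 =>
      rw [LinearMap.exact_iff]
      show LinearMap.ker (dc 0) = LinearMap.range (ι ∘ₗ Feps M 0)
      rw [LinearMap.exact_iff.mp hexι]
      exact (LinearMap.range_comp_of_range_eq_top ι
        (LinearMap.range_eq_top.2 (Feps_surj M 0))).symm
    | Int.negSucc (n + 2) => exact hexc n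
  iso := by
    refine ⟨(LinearEquiv.ofInjective ι hι).trans (LinearEquiv.ofEq _ _ ?_)⟩
    exact (LinearMap.range_comp_of_range_eq_top ι
      (LinearMap.range_eq_top.2 (Feps_surj M 0))).symm
  tensorExact I _ _ hI z := by
    obtain ⟨hinjι, hexι0, hexci⟩ := htens I hI
    match z with
    | Int.ofNat n =>
      exact h1 I hI (FP M) (Fd M) (Feps M 0) (FP_projective M) (Feps_surj M 0)
        (Fexact0 M) (Fexact M) n (Nat.zero_le n)
    | Int.negSucc 0 =>
      rw [LinearMap.exact_iff, NCmap_ker_comp I ι (Feps M 0) hinjι]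
      exact LinearMap.exact_iff.mp (NCmap_exact I (Fd M 0) (Feps M 0) (Fexact0 M)
        (Feps_surj M 0))
    | Int.negSucc 1 =>
      rw [LinearMap.exact_iff, LinearMap.exact_iff.mp hexι0]
      exact (NCmap_range_comp I ι (Feps M 0) (Feps_surj M 0)).symm
    | Int.negSucc (n + 2) => exact hexci n

end converse
/-- A left `R`-module `M` is Gorenstein flat iff (1) `Tor_i^R(I, M) = 0` for every
injective right `R`-module `I` and all `i > 0`, and (2) there is an exact sequence
`0 → M → F₀ → F₁ → ⋯` with each `Fᵢ` flat that stays exact after applying `I ⊗_R -`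
for every injective right `R`-module `I`. -/
theorem stmt12 (R : Type u) [Ring R] (M : ModuleCat.{u} R) :
    IsGorensteinFlat R ↥M ↔
      ((∀ (I : Type u) [AddCommGroup I] [Module Rᵐᵒᵖ I], Module.Injective Rᵐᵒᵖ I →
          TorVanishGT R 0 I M) ∧
       (∃ (F : ℕ → ModuleCat.{u} R) (d : ∀ i, F i →ₗ[R] F (i + 1)) (ι : ↥M →ₗ[R] F 0),
          (∀ i, FlatModule R ↥(F i)) ∧ Function.Injective ι ∧ Function.Exact ι (d 0) ∧
          (∀ i, Function.Exact (d i) (d (i + 1))) ∧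
          (∀ (I : Type u) [AddCommGroup I] [Module Rᵐᵒᵖ I], Module.Injective Rᵐᵒᵖ I →
            Function.Injective (NCmap R I ι) ∧
            Function.Exact (NCmap R I ι) (NCmap R I (d 0)) ∧
            ∀ i, Function.Exact (NCmap R I (d i)) (NCmap R I (d (i + 1)))))) := by
  constructor
  · rintro ⟨F⟩
    exact ⟨fun I _ _ hI => complete_torVanish F I hI, complete_coresolution F⟩
  · rintro ⟨h1, Fc, dc, ι, hflat, hι, hexι, hexc, htens⟩
    exact ⟨converseBuild M h1 Fc dc ι hflat hι hexι hexc htens⟩
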